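/- Let p > 2 and Λ > 0, and set α := ((p−2)/2)·√Λ, β := (pΛ/2)^{1/(p−2)} and V_0(s) := β·(cosh(αs))^{−2/(p−2)}. Then the function W(s) := V_0(s)^{p−1} satisfies the identity −W''(s) + Λ·W(s) − (p−1)·V_0(s)^{p−2}·W(s) = (2(p−1)(p−2)/p)·V_0(s)^{2p−3} − p(p−2)Λ·V_0(s)^{p−1} for all s ∈ ℝ. -/

import Mathlib

/-- The identity for `W = V₀^(p-1)`:
`-W'' + Λ W - (p-1) V₀^(p-2) W = (2(p-1)(p-2)/p) V₀^(2p-3) - p(p-2)Λ V₀^(p-1)`,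
where `V₀(s) = β (cosh(αs))^(-2/(p-2))`, `α = ((p-2)/2)√Λ`, `β = (pΛ/2)^(1/(p-2))`. -/
theorem stmt_11 (p Λ α β : ℝ) (hp : 2 < p) (hΛ : 0 < Λ)
    (hα : α = (p - 2) / 2 * Real.sqrt Λ) (hβ : β = (p * Λ / 2) ^ ((1 : ℝ) / (p - 2)))
    (V₀ W : ℝ → ℝ) (hV : ∀ s, V₀ s = β * Real.cosh (α * s) ^ (-2 / (p - 2) : ℝ))
    (hW : ∀ s, W s = V₀ s ^ (p - 1)) :
    ∀ s, -deriv (deriv W) s + Λ * W s - (p - 1) * V₀ s ^ (p - 2) * W s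
      = 2 * (p - 1) * (p - 2) / p * V₀ s ^ (2 * p - 3) - p * (p - 2) * Λ * V₀ s ^ (p - 1) := by
  intro s
  have hp2 : (0:ℝ) < p - 2 := by linarith
  have hp0 : (0:ℝ) < p := by linarith
  have hβpos : 0 < β := by
    rw [hβ]; exact Real.rpow_pos_of_pos (by positivity) _
  set γ : ℝ := -2 * (p - 1) / (p - 2) with hγ
  set K : ℝ := β ^ (p - 1) with hK
  have hKpos : 0 < K := Real.rpow_pos_of_pos hβpos _
  -- β^(p-2) = pΛ/2
  have hβp2 : β ^ (p - 2) = p * Λ / 2 := by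
    rw [hβ, ← Real.rpow_mul (by positivity : (0:ℝ) ≤ p * Λ / 2),
      one_div, inv_mul_cancel₀ hp2.ne', Real.rpow_one]
  -- W as explicit function
  have hWeq : W = fun t => K * Real.cosh (α * t) ^ γ := by
    funext t
    have hc : (0:ℝ) < Real.cosh (α * t) := Real.cosh_pos (α * t)
    rw [hW, hV, Real.mul_rpow hβpos.le (Real.rpow_nonneg hc.le _),
      ← Real.rpow_mul hc.le]
    congr 1
    congr 1; rw [hγ]; ring
  have hcosh : ∀ t, HasDerivAt (fun u => Real.cosh (α * u)) (α * Real.sinh (α * t)) t := by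
    intro t
    have h1 : HasDerivAt (fun u : ℝ => α * u) α t := (hasDerivAt_id t).const_mul α |>.congr_deriv (by ring)
    exact ((Real.hasDerivAt_cosh (α * t)).comp t h1).congr_deriv (by ring)
  have hW1 : ∀ t, HasDerivAt W ((K * γ * α) * (Real.cosh (α*t) ^ (γ-1) * Real.sinh (α*t))) t := by
    intro t
    rw [hWeq]
    have := ((hcosh t).rpow_const (p := γ) (Or.inl (Real.cosh_pos _).ne')).const_mul K
    refine this.congr_deriv ?_
    ring
  have hdW : deriv W = fun t => (K * γ * α) * (Real.cosh (α*t) ^ (γ-1) * Real.sinh (α*t)) := by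
    funext t; exact (hW1 t).deriv
  have hsinh : ∀ t, HasDerivAt (fun u => Real.sinh (α * u)) (α * Real.cosh (α * t)) t := by
    intro t
    have h1 : HasDerivAt (fun u : ℝ => α * u) α t := (hasDerivAt_id t).const_mul α |>.congr_deriv (by ring)
    exact ((Real.hasDerivAt_sinh (α * t)).comp t h1).congr_deriv (by ring)
  have hW2 : HasDerivAt (deriv W)
      ((K * γ * α) * ((α * Real.sinh (α*s)) * (γ-1) * Real.cosh (α*s) ^ (γ-2) * Real.sinh (α*s)
        + Real.cosh (α*s) ^ (γ-1) * (α * Real.cosh (α*s)))) s := by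
    rw [hdW]
    have h1 : HasDerivAt (fun t => Real.cosh (α*t) ^ (γ-1))
        ((α * Real.sinh (α*s)) * (γ-1) * Real.cosh (α*s) ^ (γ-1-1)) s :=
      (hcosh s).rpow_const (Or.inl (Real.cosh_pos _).ne')
    have h2 := (h1.mul (hsinh s)).const_mul (K * γ * α)
    refine h2.congr_deriv ?_
    ring_nf
  rw [hW2.deriv]
  -- abbreviations
  set c : ℝ := Real.cosh (α * s) with hc
  set sh : ℝ := Real.sinh (α * s) with hsh
  have hcpos : 0 < c := Real.cosh_pos _
  have hsq : sh ^ 2 = c ^ 2 - 1 := Real.sinh_sq _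
  -- rpow manipulations
  have e1 : c ^ (γ - 2) * c ^ (2:ℕ) = c ^ γ := by
    rw [← Real.rpow_natCast c 2, ← Real.rpow_add hcpos]; norm_num
  have e2 : c ^ (γ - 1) * c = c ^ γ := by
    nth_rewrite 2 [← Real.rpow_one c]
    rw [← Real.rpow_add hcpos]; ring_nf
  have e3 : c ^ (γ - 1 - 1) = c ^ (γ - 2) := by ring_nf
  -- V₀ powers
  have hV2 : V₀ s ^ (p - 2) = (p * Λ / 2) * c ^ (-2 : ℝ) := by
    rw [hV, Real.mul_rpow hβpos.le (Real.rpow_nonneg hcpos.le _), hβp2,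
      ← Real.rpow_mul hcpos.le]
    congr 2
    field_simp
  have hVp1 : V₀ s ^ (p - 1) = K * c ^ γ := by
    rw [hV, Real.mul_rpow hβpos.le (Real.rpow_nonneg hcpos.le _), ← Real.rpow_mul hcpos.le, hK]
    congr 2
    rw [hγ]; ring
  have hVp3 : V₀ s ^ (2*p - 3) = K * (p * Λ / 2) * c ^ (γ - 2) := by
    rw [hV, Real.mul_rpow hβpos.le (Real.rpow_nonneg hcpos.le _), ← Real.rpow_mul hcpos.le]
    have hb : β ^ (2*p - 3) = K * (p * Λ / 2) := by
      rw [← hβp2, hK, ← Real.rpow_add hβpos]; ring_nf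
    rw [hb]
    have : (-2 / (p-2)) * (2*p-3) = γ - 2 := by rw [hγ]; field_simp; ring
    rw [this]; try ring
  have hcm2 : c ^ (-2 : ℝ) * c ^ γ = c ^ (γ - 2) := by
    rw [← Real.rpow_add hcpos]; ring_nf
  have hsΛ : Real.sqrt Λ ^ 2 = Λ := Real.sq_sqrt hΛ.le
  rw [hW s, hVp1, hV2, hVp3]
  -- reduce sinh² and collect
  have key : (K * γ * α) * ((α * sh) * (γ-1) * c ^ (γ-2) * sh + c ^ (γ-1) * (α * c))
      = K * γ * α^2 * ((γ-1) * (c ^ γ - c ^ (γ-2)) + c ^ γ) := by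
    have : c ^ (γ-2) * sh^2 = c ^ γ - c ^ (γ-2) := by
      rw [hsq]; rw [mul_sub, mul_one]
      rw [← e1]; try ring
    calc (K * γ * α) * ((α * sh) * (γ-1) * c ^ (γ-2) * sh + c ^ (γ-1) * (α * c))
        = K * γ * α^2 * ((γ-1) * (c ^ (γ-2) * sh^2) + c ^ (γ-1) * c) := by ring
      _ = _ := by rw [this, e2]
  rw [key]
  have expand : (p - 1) * (p * Λ / 2 * c ^ (-2:ℝ)) * (K * c ^ γ)
      = (p - 1) * (p * Λ / 2) * K * c ^ (γ - 2) := by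
    rw [← hcm2]; ring
  rw [expand]
  have hαsq : α ^ 2 = (p-2)^2/4 * Λ := by rw [hα, mul_pow, Real.sq_sqrt hΛ.le]; ring
  rw [hαsq, hγ]
  generalize c ^ γ = X
  generalize c ^ (γ - 2) = Y
  field_simp
  ring
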